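/- For the backward recurrence time chain, the probability measure π on ℕ defined by π({0}) = π({1}) = 1/(2+c) and π({i}) = (∏_{j=0}^{i−1} p_j)/(2+c) for i ≥ 2 is the unique invariant probability measure of the kernel P. -/

import Mathlib

open MeasureTheory ProbabilityTheory Filter ENNReal

noncomputable def kIter {X : Type*} [MeasurableSpace X] (P : Kernel X X) : ℕ → Kernel X X
  | 0 => Kernel.id
  | n + 1 => (kIter P n) ∘ₖ P

def Invariant {X : Type*} [MeasurableSpace X] (P : Kernel X X) (π : Measure X) : Prop :=
  ∀ B : Set X, MeasurableSet B → ∫⁻ x, P x B ∂π = π B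

noncomputable def wassersteinE {X : Type*} [MeasurableSpace X] [PseudoEMetricSpace X]
    (p : ℝ) (μ ν : Measure X) : ℝ≥0∞ :=
  (⨅ (π : Measure (X × X)) (_ : π.map Prod.fst = μ ∧ π.map Prod.snd = ν),
    ∫⁻ z, edist z.1 z.2 ^ p ∂π) ^ (1 / p)

noncomputable def wasserstein {X : Type*} [MeasurableSpace X] [PseudoEMetricSpace X]
    (p : ℝ) (μ ν : Measure X) : ℝ :=
  (wassersteinE p μ ν).toReal

/-- The kernel of the backward recurrence time chain:
`P(i,{i+1}) = p_i` and `P(i,{0}) = 1 - p_i`. -/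
def IsBackwardRecurrenceKernel (p : ℕ → ℝ) (P : Kernel ℕ ℕ) : Prop :=
  ∀ i : ℕ, (P : Kernel ℕ ℕ) i =
    ENNReal.ofReal (p i) • Measure.dirac (i + 1) + ENNReal.ofReal (1 - p i) • Measure.dirac 0

/-- Standing assumptions on the sequence `{p_i}` of the backward recurrence time chain. -/
structure BRChainData (p : ℕ → ℝ) : Prop where
  h0 : p 0 = 1
  hlt : ∀ i : ℕ, 1 ≤ i → 0 < p i ∧ p i < 1
  hprod : Tendsto (fun i : ℕ => ∏ j ∈ Finset.range (i + 1), p j) atTop (nhds 0)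
  hsum : Summable fun i : ℕ => ∏ j ∈ Finset.Icc 1 (i + 1), p j

theorem backward_recurrence_invariant_measure
    (p : ℕ → ℝ) (hp : BRChainData p)
    (P : Kernel ℕ ℕ) (hP : IsBackwardRecurrenceKernel p P)
    (c : ℝ) (hc : c = ∑' i : ℕ, ∏ j ∈ Finset.Icc 1 (i + 1), p j)
    (π : Measure ℕ)
    (hπ0 : π {0} = ENNReal.ofReal (1 / (2 + c)))
    (hπ1 : π {1} = ENNReal.ofReal (1 / (2 + c)))
    (hπi : ∀ i : ℕ, 2 ≤ i →
      π {i} = ENNReal.ofReal ((∏ j ∈ Finset.range i, p j) / (2 + c))) :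
    IsProbabilityMeasure π ∧ Invariant P π ∧
      ∀ π' : Measure ℕ, IsProbabilityMeasure π' → Invariant P π' → π' = π := by
  -- Basic positivity facts
  have hppos : ∀ i, 0 < p i := by
    intro i
    rcases Nat.eq_zero_or_pos i with h | h
    · rw [h, hp.h0]; exact one_pos
    · exact (hp.hlt i h).1
  have hple : ∀ i, p i ≤ 1 := by
    intro i
    rcases Nat.eq_zero_or_pos i with h | h
    · rw [h, hp.h0]
    · exact le_of_lt (hp.hlt i h).2
  set g : ℕ → ℝ := fun i => ∏ j ∈ Finset.range i, p j with hg_def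
  have hgpos : ∀ i, 0 < g i := fun i => Finset.prod_pos (fun j _ => hppos j)
  have hc_nonneg : 0 ≤ c := by
    rw [hc]
    exact tsum_nonneg fun i => le_of_lt (Finset.prod_pos (fun j _ => hppos j))
  have h2c : (0:ℝ) < 2 + c := by linarith
  -- shift of the product
  have prodsh : ∀ n : ℕ, g (n + 2) = ∏ j ∈ Finset.Icc 1 (n + 1), p j := by
    intro n
    simp only [hg_def]
    rw [Finset.range_eq_Ico, Finset.prod_eq_prod_Ico_succ_bot (by omega), hp.h0, one_mul]
    exact congrArg (fun s => ∏ j ∈ s, p j) (Finset.Ico_add_one_right_eq_Icc (0 + 1) (n + 1))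
  have hg0 : g 0 = 1 := by simp [hg_def]
  have hg1 : g 1 = 1 := by simp [hg_def, hp.h0]
  have hgsucc : ∀ i, g (i + 1) = g i * p i := by
    intro i; simp only [hg_def]; rw [Finset.prod_range_succ]
  -- summability and sum of g
  have hg_sum : Summable g := by
    apply (summable_nat_add_iff 2).mp
    have : (fun n => g (n + 2)) = fun i => ∏ j ∈ Finset.Icc 1 (i + 1), p j :=
      funext prodsh
    rw [this]; exact hp.hsum
  have hg_tsum : ∑' i, g i = 2 + c := by
    rw [Summable.tsum_eq_zero_add hg_sum, Summable.tsum_eq_zero_add ((summable_nat_add_iff 1).mpr hg_sum)]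
    have : ∑' i : ℕ, g (i + 1 + 1) = c := by
      rw [hc]
      congr 1
      exact funext fun i => prodsh i
    rw [this, hg0, hg1]
    ring
  -- uniform description of π on singletons
  set a : ℕ → ℝ := fun i => g i / (2 + c) with ha_def
  have ha_nonneg : ∀ i, 0 ≤ a i := fun i => div_nonneg (le_of_lt (hgpos i)) (le_of_lt h2c)
  have ha_sum : Summable a := by
    simpa only [ha_def] using hg_sum.div_const (2 + c)
  have hπa : ∀ i, π {i} = ENNReal.ofReal (a i) := by
    intro i
    match i with
    | 0 => rw [hπ0]; simp [ha_def, hg0, one_div]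
    | 1 => rw [hπ1]; simp [ha_def, hg1, one_div]
    | (n+2) => exact hπi (n+2) (by omega)
  -- Singleton values of the kernel
  have hPib : ∀ i b : ℕ, P i {b} =
      (if b = i + 1 then ENNReal.ofReal (p i) else 0) +
        (if b = 0 then ENNReal.ofReal (1 - p i) else 0) := by
    intro i b
    rw [hP i]
    simp only [Measure.coe_add, Measure.coe_smul, Pi.add_apply, Pi.smul_apply, smul_eq_mul,
      Measure.dirac_apply, Set.indicator_apply, Set.mem_singleton_iff, Pi.one_apply]
    by_cases h1 : b = i + 1 <;> by_cases h2 : b = 0 <;>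
      simp [h1, h2, eq_comm] <;> omega
  -- key tsum identities for any measure
  have key_succ : ∀ (μ : Measure ℕ) (k : ℕ),
      ∑' i, P i {k + 1} * μ {i} = ENNReal.ofReal (p k) * μ {k} := by
    intro μ k
    rw [tsum_eq_single k]
    · rw [hPib k (k + 1)]
      simp
    · intro i hi
      rw [hPib i (k + 1)]
      have h1 : ¬ (k + 1 = i + 1) := by omega
      have h2 : ¬ (k + 1 = 0) := by omega
      simp [h1, h2, Ne.symm hi]
  have key_zero : ∀ (μ : Measure ℕ),
      ∑' i, P i {0} * μ {i} = ∑' i, ENNReal.ofReal (1 - p i) * μ {i} := by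
    intro μ
    congr 1
    funext i
    rw [hPib i 0]
    simp
  -- Probability measure
  have htsum_ofReal_a : ∑' i, ENNReal.ofReal (a i) = 1 := by
    rw [← ENNReal.ofReal_tsum_of_nonneg ha_nonneg ha_sum]
    have : ∑' i, a i = 1 := by
      simp only [ha_def]
      rw [tsum_div_const, hg_tsum, div_self (ne_of_gt h2c)]
    rw [this, ENNReal.ofReal_one]
  have hprob : IsProbabilityMeasure π := by
    constructor
    have : π Set.univ = ∑' i, π {i} := by
      rw [← MeasureTheory.lintegral_one, lintegral_countable']
      simp
    rw [this]
    simp only [hπa]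
    exact htsum_ofReal_a
  -- invariance
  have hbind_singleton : ∀ (μ : Measure ℕ) (b : ℕ),
      (μ.bind ⇑P) {b} = ∑' i, P i {b} * μ {i} := by
    intro μ b
    rw [Measure.bind_apply (measurableSet_singleton b) P.measurable.aemeasurable, lintegral_countable']
  have hbind : π.bind ⇑P = π := by
    apply MeasureTheory.Measure.ext_of_singleton
    intro b
    rw [hbind_singleton]
    match b with
    | 0 =>
      rw [key_zero]
      simp only [hπa]
      have hmul : ∀ i, ENNReal.ofReal (1 - p i) * ENNReal.ofReal (a i)
          = ENNReal.ofReal (a i - a (i + 1)) := by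
        intro i
        rw [← ENNReal.ofReal_mul (by linarith [hple i])]
        congr 1
        simp only [ha_def]
        rw [hgsucc i]
        ring
      simp only [hmul]
      have hsa1 : Summable (fun i => a (i + 1)) := (summable_nat_add_iff 1).mpr ha_sum
      have hnn : ∀ i, 0 ≤ a i - a (i + 1) := by
        intro i
        simp only [ha_def]
        rw [← sub_div]
        apply div_nonneg _ h2c.le
        rw [hgsucc i]
        nlinarith [hgpos i, hple i]
      rw [← ENNReal.ofReal_tsum_of_nonneg hnn (ha_sum.sub hsa1)]
      congr 1
      have ht := Summable.tsum_sub ha_sum hsa1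
      have hz := Summable.tsum_eq_zero_add ha_sum
      rw [ht, hz]
      ring
    | (k+1) =>
      rw [key_succ]
      simp only [hπa]
      rw [← ENNReal.ofReal_mul (le_of_lt (hppos k))]
      congr 1
      simp only [ha_def]
      rw [hgsucc k]
      ring
  have hinv : Invariant P π := by
    intro B hB
    rw [← Measure.bind_apply hB P.measurable.aemeasurable, hbind]
  refine ⟨hprob, hinv, ?_⟩
  -- uniqueness
  intro π' hprob' hinv'
  have hrec : ∀ b : ℕ, π' {b} = ∑' i, P i {b} * π' {i} := by
    intro b
    rw [← hinv' {b} (measurableSet_singleton b), lintegral_countable']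
  have hstep : ∀ k, π' {k + 1} = ENNReal.ofReal (p k) * π' {k} := by
    intro k
    rw [hrec (k + 1), key_succ]
  have hform : ∀ i, π' {i} = ENNReal.ofReal (g i) * π' {0} := by
    intro i
    induction i with
    | zero => rw [hg0]; simp
    | succ n ih =>
      rw [hstep n, ih, hgsucc n, ← mul_assoc, ← ENNReal.ofReal_mul (le_of_lt (hppos n)),
        mul_comm (p n) (g n)]
  have hsum1 : (1 : ℝ≥0∞) = ENNReal.ofReal (2 + c) * π' {0} := by
    have huniv : π' Set.univ = ∑' i, π' {i} := by
      rw [← MeasureTheory.lintegral_one, lintegral_countable']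
      simp
    have : (1 : ℝ≥0∞) = ∑' i, π' {i} := by
      rw [← huniv, measure_univ]
    rw [this, tsum_congr hform, ENNReal.tsum_mul_right, ← ENNReal.ofReal_tsum_of_nonneg
      (fun i => le_of_lt (hgpos i)) hg_sum, hg_tsum]
  have hne0 : ENNReal.ofReal (2 + c) ≠ 0 := (ENNReal.ofReal_pos.mpr h2c).ne'
  have hnetop : ENNReal.ofReal (2 + c) ≠ ⊤ := ENNReal.ofReal_ne_top
  have hπ'0 : π' {0} = ENNReal.ofReal (1 / (2 + c)) := by
    rw [one_div, ENNReal.ofReal_inv_of_pos h2c]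
    rw [← one_mul (π' {0}), ← ENNReal.inv_mul_cancel hne0 hnetop, mul_assoc, ← hsum1, mul_one]
  apply MeasureTheory.Measure.ext_of_singleton
  intro b
  rw [hform b, hπ'0, hπa b, ← ENNReal.ofReal_mul (le_of_lt (hgpos b))]
  congr 1
  simp only [ha_def]
  ring
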